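/- Let X and Y be reflexive Banach spaces and B : X × Y → ℝ a bounded bilinear form. Then the following are equivalent: (i) B satisfies the inf-sup condition inf_{0≠w∈X} sup_{0≠v∈Y} B(w,v)/(‖w‖_X ‖v‖_Y) ≥ γ > 0 together with the adjoint injectivity condition sup_{w∈X} B(w,v) > 0 for all 0≠v∈Y; (ii) for every F ∈ Y* the problem B(u,v) = F(v) for all v ∈ Y admits a unique solution u ∈ X, and in this case ‖u‖_X ≤ γ⁻¹ ‖F‖_{Y*}. -/

import Mathlib

open NormedSpace

lemma aux_sup_le {X Y : Type*} [NormedAddCommGroup X] [NormedSpace ℝ X]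
    [NormedAddCommGroup Y] [NormedSpace ℝ Y]
    (B : X →L[ℝ] Y →L[ℝ] ℝ) (w : X) :
    (⨆ v : {v : Y // v ≠ 0}, B w (v : Y) / ‖(v : Y)‖) ≤ ‖B w‖ := by
  apply Real.iSup_le _ (norm_nonneg _)
  rintro ⟨v, hv⟩
  have hv' : (0:ℝ) < ‖v‖ := norm_pos_iff.mpr hv
  rw [div_le_iff₀ hv']
  exact le_trans (le_abs_self _) ((B w).le_opNorm v)

lemma aux_le_sup {X Y : Type*} [NormedAddCommGroup X] [NormedSpace ℝ X]
    [NormedAddCommGroup Y] [NormedSpace ℝ Y] [Nontrivial Y]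
    (B : X →L[ℝ] Y →L[ℝ] ℝ) (w : X) :
    ‖B w‖ ≤ ⨆ v : {v : Y // v ≠ 0}, B w (v : Y) / ‖(v : Y)‖ := by
  set M := ⨆ v : {v : Y // v ≠ 0}, B w (v : Y) / ‖(v : Y)‖ with hM
  have hbdd : BddAbove (Set.range fun v : {v : Y // v ≠ 0} => B w (v : Y) / ‖(v : Y)‖) := by
    refine ⟨‖B w‖, ?_⟩
    rintro x ⟨⟨v, hv⟩, rfl⟩
    have hv' : (0:ℝ) < ‖v‖ := norm_pos_iff.mpr hv
    rw [div_le_iff₀ hv']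
    exact le_trans (le_abs_self _) ((B w).le_opNorm v)
  have hle : ∀ v : Y, v ≠ 0 → B w v / ‖v‖ ≤ M :=
    fun v hv => le_ciSup hbdd (⟨v, hv⟩ : {v : Y // v ≠ 0})
  obtain ⟨v0, hv0⟩ := exists_ne (0 : Y)
  have hM0 : (0:ℝ) ≤ M := by
    have h1 := hle v0 hv0
    have h2 := hle (-v0) (neg_ne_zero.mpr hv0)
    rw [map_neg, norm_neg] at h2
    rw [neg_div] at h2
    linarith
  apply ContinuousLinearMap.opNorm_le_bound _ hM0
  intro v
  rcases eq_or_ne v 0 with rfl | hv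
  · simp
  have hv' : (0:ℝ) < ‖v‖ := norm_pos_iff.mpr hv
  have h1 := hle v hv
  have h2 := hle (-v) (neg_ne_zero.mpr hv)
  rw [map_neg, norm_neg, neg_div] at h2
  rw [Real.norm_eq_abs, abs_le]
  constructor
  · have h3 := (le_div_iff₀ hv').mp (by linarith : -M ≤ B w v / ‖v‖)
    linarith
  · have h3 := (div_le_iff₀ hv').mp h1
    linarith [mul_comm M ‖v‖]

lemma aux_sep' {E : Type*} [NormedAddCommGroup E] [NormedSpace ℝ E]
    (S : Submodule ℝ E) (hS : IsClosed (S : Set E)) (x : E) (hx : x ∉ S) :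
    ∃ f : E →L[ℝ] ℝ, (∀ y ∈ S, f y = 0) ∧ f x ≠ 0 := by
  obtain ⟨f, u, hfu, hux⟩ :=
    geometric_hahn_banach_closed_point (S.convex (𝕜 := ℝ)) hS hx
  have hvanish : ∀ y ∈ S, f y = 0 := by
    intro y hy
    by_contra h
    have h2 := hfu (((u + 1) / f y) • y) (S.smul_mem _ hy)
    rw [f.map_smul, smul_eq_mul, div_mul_cancel₀ _ h] at h2
    linarith
  have h0 : (0:ℝ) < u := by
    have := hfu 0 S.zero_mem
    simpa using this
  exact ⟨f, hvanish, by intro h; rw [h] at hux; linarith⟩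


/-- Nečas / Banach–Nečas–Babuška theorem: for a bounded bilinear
form `B` on reflexive Banach spaces `X × Y`, the inf-sup condition with constant
`γ > 0` together with the adjoint injectivity condition holds if and only if
every `F ∈ Y*` admits a unique solution `u ∈ X` of `B(u,·) = F`, and in that
case `‖u‖ ≤ γ⁻¹ ‖F‖`. -/
theorem stmt0 {X Y : Type*}
    [NormedAddCommGroup X] [NormedSpace ℝ X] [CompleteSpace X]
    [NormedAddCommGroup Y] [NormedSpace ℝ Y] [CompleteSpace Y]
    (hreflX : Function.Bijective (NormedSpace.inclusionInDoubleDual ℝ X))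
    (hreflY : Function.Bijective (NormedSpace.inclusionInDoubleDual ℝ Y))
    (B : X →L[ℝ] Y →L[ℝ] ℝ) (C : ℝ)
    (hbdd : ∀ w v, |B w v| ≤ C * ‖w‖ * ‖v‖)
    (γ : ℝ) (hγ : 0 < γ) :
    ((∀ w : X, w ≠ 0 → γ * ‖w‖ ≤ ⨆ v : {v : Y // v ≠ 0}, B w (v : Y) / ‖(v : Y)‖) ∧
      (∀ v : Y, v ≠ 0 → ∃ w : X, 0 < B w v))
    ↔
    (∀ F : Y →L[ℝ] ℝ,
      (∃! u : X, ∀ v : Y, B u v = F v) ∧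
      (∀ u : X, (∀ v : Y, B u v = F v) → ‖u‖ ≤ γ⁻¹ * ‖F‖)) := by
  constructor
  · rintro ⟨hinf, hadj⟩ F
    have h1 : ∀ w : X, γ * ‖w‖ ≤ ‖B w‖ := by
      intro w
      rcases eq_or_ne w 0 with rfl | hw
      · simp
      · exact le_trans (hinf w hw) (aux_sup_le B w)
    have antilip : AntilipschitzWith ⟨γ⁻¹, (inv_pos.mpr hγ).le⟩ ⇑B := by
      apply B.antilipschitz_of_bound
      intro x
      have h2 := h1 x
      calc ‖x‖ = γ⁻¹ * (γ * ‖x‖) := by field_simp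
        _ ≤ γ⁻¹ * ‖B x‖ := mul_le_mul_of_nonneg_left h2 (by positivity)
    have hinj : Function.Injective ⇑B := antilip.injective
    have hclosed : IsClosed (Set.range ⇑B) :=
      antilip.isClosed_range B.uniformContinuous
    have hsurj : ∃ u : X, B u = F := by
      by_contra h
      push_neg at h
      have hG : F ∉ LinearMap.range (B : X →ₗ[ℝ] Y →L[ℝ] ℝ) := by
        simp only [LinearMap.mem_range]
        push_neg
        exact h
      have hSclosed : IsClosed ((LinearMap.range (B : X →ₗ[ℝ] Y →L[ℝ] ℝ) : Submodule ℝ (Y →L[ℝ] ℝ)) : Set (Y →L[ℝ] ℝ)) := by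
        have heq : ((LinearMap.range (B : X →ₗ[ℝ] Y →L[ℝ] ℝ) : Submodule ℝ (Y →L[ℝ] ℝ)) : Set (Y →L[ℝ] ℝ))
            = Set.range ⇑B := by
          ext g; simp [LinearMap.mem_range]
        rw [heq]; exact hclosed
      obtain ⟨f, hf0, hfF⟩ := aux_sep' _ hSclosed F hG
      obtain ⟨v, hv⟩ := hreflY.2 f
      have hBv : ∀ w : X, B w v = 0 := by
        intro w
        have h3 := hf0 (B w) ⟨w, rfl⟩
        rw [← hv] at h3
        simpa [NormedSpace.dual_def] using h3
      have hvne : v ≠ 0 := by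
        rintro rfl
        apply hfF
        rw [← hv]
        simp
      obtain ⟨w, hw⟩ := hadj v hvne
      rw [hBv w] at hw
      exact lt_irrefl _ hw
    obtain ⟨u, hu⟩ := hsurj
    refine ⟨⟨u, fun v => by rw [hu], fun u' hu' => hinj (by ext v; rw [hu' v, hu])⟩, ?_⟩
    intro u' hu'
    have hBu' : B u' = F := by ext v; exact hu' v
    have h2 := h1 u'
    rw [hBu'] at h2
    calc ‖u'‖ = γ⁻¹ * (γ * ‖u'‖) := by field_simp
      _ ≤ γ⁻¹ * ‖F‖ := mul_le_mul_of_nonneg_left h2 (by positivity)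
  · intro hs
    have key : ∀ w : X, γ * ‖w‖ ≤ ‖B w‖ := by
      intro w
      have h := (hs (B w)).2 w (fun v => rfl)
      calc γ * ‖w‖ ≤ γ * (γ⁻¹ * ‖B w‖) := mul_le_mul_of_nonneg_left h hγ.le
        _ = ‖B w‖ := by field_simp
    constructor
    · intro w hw
      rcases subsingleton_or_nontrivial Y with hY | hY
      · exfalso
        have hb : (B w) = 0 := by ext v; rw [Subsingleton.elim v (0:Y)]; simp
        have h2 := key w
        rw [hb, norm_zero] at h2
        have h3 : (0:ℝ) < ‖w‖ := norm_pos_iff.mpr hw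
        nlinarith
      · exact le_trans (key w) (aux_le_sup B w)
    · intro v hv
      obtain ⟨g, hg1, hg2⟩ := exists_dual_vector ℝ v (norm_ne_zero_iff.mpr hv)
      obtain ⟨u, hu, -⟩ := (hs g).1
      refine ⟨u, ?_⟩
      rw [hu v, hg2]
      exact norm_pos_iff.mpr hv
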